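/- arXiv:2402.11200 — 2 statements merged into one kernel-verified Lean document; each statement's English description precedes it below -/
import Mathlib

section
/- Let μ be a probability measure, ν a measure with ν ≪ μ, and f = dν/dμ the Radon–Nikodym derivative. Let K be a Markov kernel and let K*_μ denote the adjoint operator of K with respect to the inner products ⟨·,·⟩_μ and ⟨·,·⟩_{μK}. Then dνK/dμK = K*_μ f holds μK-almost everywhere. -/
open MeasureTheory ProbabilityTheory
open scoped ENNReal

/-- If `ν ≪ μ` with density `f = dν/dμ`, and `K*_μ` is the adjoint
of the Markov kernel `K` (w.r.t. the inner products of `L²(μ)` and `L²(μK)`),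
then `dνK/dμK = K*_μ f`, `μK`-almost everywhere. -/
theorem rnDeriv_bind_eq_adjoint_rnDeriv
    {Ω : Type*} [MeasurableSpace Ω]
    (κ : Kernel Ω Ω) [IsMarkovKernel κ]
    (μ ν : Measure Ω) [IsProbabilityMeasure μ] [IsFiniteMeasure ν]
    (hac : ν ≪ μ)
    (Kstar : (Ω → ℝ) → (Ω → ℝ))
    (hKstar_meas : ∀ f : Ω → ℝ, Measurable f → Measurable (Kstar f))
    (hadj : ∀ (h f : Ω → ℝ), Measurable h → Measurable f →
      Integrable (fun x => (∫ y, h y ∂(κ x)) * f x) μ →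
      Integrable (fun x => h x * Kstar f x) (μ.bind κ) →
      ∫ x, (∫ y, h y ∂(κ x)) * f x ∂μ = ∫ x, h x * Kstar f x ∂(μ.bind κ)) :
    (fun x => ((ν.bind κ).rnDeriv (μ.bind κ) x).toReal)
      =ᵐ[μ.bind κ] Kstar (fun y => (ν.rnDeriv μ y).toReal) := by
  set f : Ω → ℝ := fun y => (ν.rnDeriv μ y).toReal with hf_def
  set g : Ω → ℝ := Kstar f with hg_def
  have hf_meas : Measurable f := (Measure.measurable_rnDeriv ν μ).ennreal_toReal
  have hg_meas : Measurable g := hKstar_meas f hf_meas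
  have hf_nonneg : ∀ x, 0 ≤ f x := fun x => ENNReal.toReal_nonneg
  have hf_int : Integrable f μ := Measure.integrable_toReal_rnDeriv
  haveI hPm : IsProbabilityMeasure (μ.bind κ) := by
    constructor
    rw [Measure.bind_apply MeasurableSet.univ κ.measurable.aemeasurable]
    simp
  haveI hFn : IsFiniteMeasure (ν.bind κ) := by
    constructor
    rw [Measure.bind_apply MeasurableSet.univ κ.measurable.aemeasurable]
    simpa using measure_lt_top ν Set.univ
  have hacK : ν.bind κ ≪ μ.bind κ := by
    refine Measure.AbsolutelyContinuous.mk fun s hs h0 => ?_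
    rw [Measure.bind_apply hs κ.measurable.aemeasurable] at h0 ⊢
    have h1 : ∀ᵐ x ∂μ, κ x s = 0 := (lintegral_eq_zero_iff (κ.measurable_coe hs)).mp h0
    have h2 : ∀ᵐ x ∂ν, κ x s = 0 := hac.ae_le h1
    exact (lintegral_eq_zero_iff (κ.measurable_coe hs)).mpr h2
  -- key identity
  have key : ∀ s : Set Ω, MeasurableSet s →
      Integrable (fun x => s.indicator (1 : Ω → ℝ) x * g x) (μ.bind κ) →
      ∫ x in s, g x ∂(μ.bind κ) = ((ν.bind κ) s).toReal := by
    intro s hs hint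
    have hκs_meas : Measurable (fun x => (κ x s).toReal) :=
      (κ.measurable_coe hs).ennreal_toReal
    have hκs_le : ∀ x, (κ x s).toReal ≤ 1 := by
      intro x
      exact ENNReal.toReal_le_of_le_ofReal zero_le_one (by simpa using prob_le_one (μ := κ x))
    have hκs_nonneg : ∀ x, 0 ≤ (κ x s).toReal := fun x => ENNReal.toReal_nonneg
    have hind : ∀ x : Ω, (∫ y, s.indicator (1 : Ω → ℝ) y ∂(κ x)) = (κ x s).toReal := by
      intro x
      rw [integral_indicator_one hs]; rfl
    have hint1 : Integrable (fun x => (∫ y, s.indicator (1 : Ω → ℝ) y ∂(κ x)) * f x) μ := by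
      simp only [hind]
      refine hf_int.mono ((hκs_meas.mul hf_meas).aestronglyMeasurable) ?_
      filter_upwards with x
      calc ‖(κ x s).toReal * f x‖ = (κ x s).toReal * f x := by
            rw [Real.norm_eq_abs, abs_of_nonneg (mul_nonneg (hκs_nonneg x) (hf_nonneg x))]
        _ ≤ 1 * f x := mul_le_mul_of_nonneg_right (hκs_le x) (hf_nonneg x)
        _ = f x := one_mul _
        _ ≤ ‖f x‖ := le_abs_self _
    have hmeas_ind : Measurable (s.indicator (1 : Ω → ℝ)) :=
      measurable_const.indicator hs
    have hid := hadj (s.indicator (1 : Ω → ℝ)) f hmeas_ind hf_meas hint1 hint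
    simp only [hind] at hid
    have hrhs : ∫ x, s.indicator (1 : Ω → ℝ) x * g x ∂(μ.bind κ)
        = ∫ x in s, g x ∂(μ.bind κ) := by
      rw [← integral_indicator hs]
      congr 1
      ext x
      by_cases hx : x ∈ s <;> simp [Set.indicator, hx]
    rw [hrhs] at hid
    rw [← hid]
    have hsmul : ∫ x, (κ x s).toReal * f x ∂μ = ∫ x, f x • (κ x s).toReal ∂μ := by
      congr 1; ext x; rw [smul_eq_mul, mul_comm]
    rw [hsmul, hf_def, integral_rnDeriv_smul hac]
    rw [Measure.bind_apply hs κ.measurable.aemeasurable]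
    rw [← integral_toReal (κ.measurable_coe hs).aemeasurable]
    filter_upwards with x
    exact lt_of_le_of_lt (prob_le_one (μ := κ x)) ENNReal.one_lt_top
  -- integrability of bounded truncations
  have hint_trunc : ∀ (s : Set Ω), MeasurableSet s → ∀ C : ℝ, (∀ x ∈ s, |g x| ≤ C) →
      Integrable (fun x => s.indicator (1 : Ω → ℝ) x * g x) (μ.bind κ) := by
    intro s hs C hC
    refine ⟨((measurable_const.indicator hs).mul hg_meas).aestronglyMeasurable, ?_⟩
    refine HasFiniteIntegral.of_bounded (C := max C 0) ?_
    filter_upwards with x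
    by_cases hx : x ∈ s
    · simp only [Set.indicator_of_mem hx, Pi.one_apply, one_mul]
      rw [Real.norm_eq_abs]
      exact le_max_of_le_left (hC x hx)
    · simp [Set.indicator_of_notMem hx]
  -- g nonneg a.e.
  have hg_nonneg : ∀ᵐ x ∂(μ.bind κ), 0 ≤ g x := by
    have hnull : ∀ n : ℕ, (μ.bind κ) (g ⁻¹' Set.Icc (-(n+1 : ℝ)) (-(1/(n+1)))) = 0 := by
      intro n
      set s := g ⁻¹' Set.Icc (-(n+1 : ℝ)) (-(1/(n+1))) with hs_def
      have hs : MeasurableSet s := hg_meas measurableSet_Icc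
      have hb : ∀ x ∈ s, |g x| ≤ (n+1 : ℝ) := by
        intro x hx
        simp only [hs_def, Set.mem_preimage, Set.mem_Icc] at hx
        rcases hx with ⟨h1, h2⟩
        have hpos : (0:ℝ) < 1/(n+1) := by positivity
        rw [abs_le]
        constructor
        · linarith
        · linarith
      have hint := hint_trunc s hs (n+1) hb
      have heq := key s hs hint
      have h1 : (0:ℝ) ≤ ∫ x in s, g x ∂(μ.bind κ) := heq ▸ ENNReal.toReal_nonneg
      have h2 : ∫ x in s, g x ∂(μ.bind κ)
          ≤ ∫ _x in s, (-(1/(n+1)) : ℝ) ∂(μ.bind κ) := by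
        refine setIntegral_mono_on ?_ (integrable_const _).integrableOn hs ?_
        · refine hint.integrableOn.congr_fun (fun x hx => ?_) hs
          simp [Set.indicator_of_mem hx]
        · intro x hx
          simp only [hs_def, Set.mem_preimage, Set.mem_Icc] at hx
          exact hx.2
      rw [setIntegral_const, smul_eq_mul, measureReal_def] at h2
      have hpos : (0:ℝ) < 1/(n+1) := by positivity
      have hT : (0:ℝ) ≤ ((μ.bind κ) s).toReal := ENNReal.toReal_nonneg
      have h4 : ((μ.bind κ) s).toReal = 0 := by nlinarith
      exact ((ENNReal.toReal_eq_zero_iff _).mp h4).resolve_right (measure_ne_top _ _)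
    have hsub : {x | g x < 0} ⊆ ⋃ n : ℕ, g ⁻¹' Set.Icc (-(n+1 : ℝ)) (-(1/(n+1))) := by
      intro x hx
      simp only [Set.mem_setOf_eq] at hx
      obtain ⟨n, hn⟩ := exists_nat_ge (max (-(g x)) (1/(-(g x))))
      have hgx : (0:ℝ) < -(g x) := by linarith
      have ha : -(g x) ≤ n := le_trans (le_max_left _ _) hn
      have hb : 1/(-(g x)) ≤ n := le_trans (le_max_right _ _) hn
      refine Set.mem_iUnion.mpr ⟨n, ?_⟩
      simp only [Set.mem_preimage, Set.mem_Icc]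
      constructor
      · linarith
      · -- g x ≤ -(1/(n+1)), i.e. 1/(n+1) ≤ -(g x)
        rw [le_neg]
        have hn1 : (0:ℝ) < (n:ℝ) + 1 := by positivity
        rw [div_le_iff₀ hgx] at hb
        rw [div_le_iff₀ hn1]
        nlinarith
    have : (μ.bind κ) {x | g x < 0} = 0 :=
      measure_mono_null hsub (measure_iUnion_null hnull)
    rw [ae_iff]
    simpa [not_le] using this
  -- integrability of g
  have hg_int : Integrable g (μ.bind κ) := by
    set A : ℕ → Set Ω := fun n => g ⁻¹' Set.Icc (0:ℝ) n with hA_def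
    have hA_meas : ∀ n, MeasurableSet (A n) := fun n => hg_meas measurableSet_Icc
    have hA_mono : Monotone A := by
      intro a b hab x hx
      simp only [hA_def, Set.mem_preimage, Set.mem_Icc] at hx ⊢
      exact ⟨hx.1, hx.2.trans (by exact_mod_cast Nat.cast_le.mpr hab)⟩
    have hbound : ∀ n : ℕ, ∫⁻ x in A n, ENNReal.ofReal (g x) ∂(μ.bind κ)
        ≤ ENNReal.ofReal (((ν.bind κ) Set.univ).toReal) := by
      intro n
      have hb : ∀ x ∈ A n, |g x| ≤ (n:ℝ) := by
        intro x hx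
        simp only [hA_def, Set.mem_preimage, Set.mem_Icc] at hx
        rw [abs_le]
        exact ⟨le_trans (neg_nonpos.mpr (Nat.cast_nonneg n)) hx.1, hx.2⟩
      have hint := hint_trunc (A n) (hA_meas n) n hb
      have hint' : IntegrableOn g (A n) (μ.bind κ) := by
        refine hint.integrableOn.congr_fun (fun x hx => ?_) (hA_meas n)
        simp [Set.indicator_of_mem hx]
      have heq := key (A n) (hA_meas n) hint
      have hnn : 0 ≤ᵐ[(μ.bind κ).restrict (A n)] g := by
        refine (ae_restrict_iff' (hA_meas n)).mpr ?_
        filter_upwards with x hx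
        simp only [hA_def, Set.mem_preimage, Set.mem_Icc] at hx
        exact hx.1
      rw [← ofReal_integral_eq_lintegral_ofReal hint' hnn, heq]
      refine ENNReal.ofReal_le_ofReal ?_
      refine (ENNReal.toReal_le_toReal (measure_ne_top _ _) (measure_ne_top _ _)).mpr ?_
      exact measure_mono (Set.subset_univ _)
    have hsup : ∀ x, ENNReal.ofReal (g x)
        = ⨆ n : ℕ, (A n).indicator (fun y => ENNReal.ofReal (g y)) x := by
      intro x
      by_cases hx : 0 ≤ g x
      · obtain ⟨n, hn⟩ := exists_nat_ge (g x)
        have hmem : x ∈ A n := by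
          simp only [hA_def, Set.mem_preimage, Set.mem_Icc]
          exact ⟨hx, hn⟩
        refine le_antisymm ?_ ?_
        · exact le_iSup_of_le n (by rw [Set.indicator_of_mem hmem])
        · refine iSup_le fun m => ?_
          by_cases hm : x ∈ A m
          · rw [Set.indicator_of_mem hm]
          · simp [Set.indicator_of_notMem hm]
      · push_neg at hx
        rw [ENNReal.ofReal_eq_zero.mpr hx.le]
        refine le_antisymm zero_le ?_
        refine iSup_le fun m => ?_
        by_cases hm : x ∈ A m
        · exfalso
          have := hm.1
          simp only [hA_def, Set.mem_preimage, Set.mem_Icc] at hm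
          exact absurd hm.1 (not_le.mpr hx)
        · simp [Set.indicator_of_notMem hm]
    have hlint : ∫⁻ x, ENNReal.ofReal (g x) ∂(μ.bind κ) < ⊤ := by
      have hmct : ∫⁻ x, ENNReal.ofReal (g x) ∂(μ.bind κ)
          = ⨆ n : ℕ, ∫⁻ x in A n, ENNReal.ofReal (g x) ∂(μ.bind κ) := by
        have h1 : ∫⁻ x, ENNReal.ofReal (g x) ∂(μ.bind κ)
            = ∫⁻ x, ⨆ n : ℕ, (A n).indicator (fun y => ENNReal.ofReal (g y)) x ∂(μ.bind κ) :=
          lintegral_congr fun x => hsup x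
        rw [h1, lintegral_iSup]
        · refine iSup_congr fun n => ?_
          rw [lintegral_indicator (hA_meas n)]
        · exact fun n => (hg_meas.ennreal_ofReal).indicator (hA_meas n)
        · intro a b hab x
          by_cases hx : x ∈ A a
          · simp only [Set.indicator_of_mem hx, Set.indicator_of_mem (hA_mono hab hx)]
            exact le_rfl
          · simp [Set.indicator_of_notMem hx]
      rw [hmct]
      exact lt_of_le_of_lt (iSup_le hbound) ENNReal.ofReal_lt_top
    refine ⟨hg_meas.aestronglyMeasurable, ?_⟩
    rw [hasFiniteIntegral_iff_norm]
    refine lt_of_eq_of_lt ?_ hlint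
    refine lintegral_congr_ae ?_
    filter_upwards [hg_nonneg] with x hx
    rw [Real.norm_eq_abs, abs_of_nonneg hx]
  -- conclusion
  have hrn_int : Integrable (fun x => ((ν.bind κ).rnDeriv (μ.bind κ) x).toReal) (μ.bind κ) :=
    Measure.integrable_toReal_rnDeriv
  refine Integrable.ae_eq_of_forall_setIntegral_eq _ _ hrn_int hg_int fun s hs _ => ?_
  rw [Measure.setIntegral_toReal_rnDeriv hacK s]
  have hint : Integrable (fun x => s.indicator (1 : Ω → ℝ) x * g x) (μ.bind κ) := by
    refine hg_int.mono ((measurable_const.indicator hs).mul hg_meas).aestronglyMeasurable ?_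
    filter_upwards with x
    by_cases hx : x ∈ s <;> simp [Set.indicator, hx]
  exact (key s hs hint).symm
end

section
/- Let π be a probability measure on a countable (discrete) space Ω and x ∈ Ω with π({x}) ≥ 1/2. Let ψ be a Young function. Then the Luxemburg norm of dδ_x/dπ − 1 with respect to π satisfies ‖dδ_x/dπ − 1‖^L_{ψ,π} ≤ 1/ψ⁻¹( 1/(2π(Ω∖{x})) ). -/
open Classical MeasureTheory
open scoped ENNReal

/-- A Young function: convex, non-decreasing on `ℝ⁺`, vanishing at `0`, tending to `∞`. -/
def IsYoung (ψ : ℝ → ℝ) : Prop :=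
  ConvexOn ℝ (Set.Ici 0) ψ ∧ MonotoneOn ψ (Set.Ici 0) ∧ ψ 0 = 0 ∧
    Filter.Tendsto ψ Filter.atTop Filter.atTop ∧ ∀ x ∈ Set.Ici (0:ℝ), 0 ≤ ψ x

/-- The Luxemburg norm of `f` with respect to the Young function `ψ` and measure `π`. -/
noncomputable def luxNorm {Ω : Type*} [MeasurableSpace Ω] (ψ : ℝ → ℝ)
    (π : MeasureTheory.Measure Ω) (f : Ω → ℝ) : ℝ :=
  sInf {σ : ℝ | 0 < σ ∧ ∫ x, ψ (|f x| / σ) ∂π ≤ 1}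

/-- The Amemiya norm of `f` with respect to the Young function `ψ` and measure `π`. -/
noncomputable def amNorm {Ω : Type*} [MeasurableSpace Ω] (ψ : ℝ → ℝ)
    (π : MeasureTheory.Measure Ω) (f : Ω → ℝ) : ℝ :=
  sInf {a : ℝ | ∃ t : ℝ, 0 < t ∧ a = (1 + ∫ x, ψ (t * |f x|) ∂π) / t}

/-- Membership in the Orlicz space `L_ψ(π)`. -/
def MemOrlicz {Ω : Type*} [MeasurableSpace Ω] (ψ : ℝ → ℝ)
    (π : MeasureTheory.Measure Ω) (f : Ω → ℝ) : Prop :=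
  ∃ lam : ℝ, 0 < lam ∧ MeasureTheory.Integrable (fun x => ψ (lam * |f x|)) π

/-- Generalized inverse of a non-decreasing function on `ℝ⁺`. -/
noncomputable def genInv (φ : ℝ → ℝ) (y : ℝ) : ℝ :=
  sInf {x : ℝ | 0 ≤ x ∧ y ≤ φ x}

/-- On a countable space, if `π({x}) ≥ 1/2` then the Luxemburg
norm of `dδ_x/dπ − 1` is at most `1/ψ⁻¹(1/(2π(Ω∖{x})))`. -/
theorem luxemburg_norm_dirac_density_bound
    {Ω : Type*} [MeasurableSpace Ω] [Countable Ω] [MeasurableSingletonClass Ω]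
    (π : Measure Ω) [IsProbabilityMeasure π]
    (ψ : ℝ → ℝ) (hψ : IsYoung ψ)
    (x : Ω) (hx : (1 : ℝ≥0∞) / 2 ≤ π {x}) :
    luxNorm ψ π (fun ω => (if ω = x then 1 / (π {x}).toReal else 0) - 1)
      ≤ 1 / genInv ψ (1 / (2 * (π ({x}ᶜ)).toReal)) := by
  obtain ⟨hconv, hmono, h0, htop, hnonneg⟩ := hψ
  set p := (π {x}).toReal with hp
  set q := (π ({x}ᶜ)).toReal with hq
  have hxfin : π {x} ≠ ⊤ := measure_ne_top π _
  have hsum : π {x} + π {x}ᶜ = 1 := by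
    rw [measure_add_measure_compl (measurableSet_singleton x), measure_univ]
  have hpq : p + q = 1 := by
    have := congrArg ENNReal.toReal hsum
    rwa [ENNReal.toReal_add hxfin (measure_ne_top π _), ENNReal.toReal_one] at this
  have hphalf : (1:ℝ)/2 ≤ p := by
    have h := ENNReal.toReal_mono hxfin hx
    simpa using h
  have hp0 : 0 < p := by linarith
  have hq0 : 0 ≤ q := ENNReal.toReal_nonneg
  have hqp : q ≤ p := by linarith
  have hp1 : p ≤ 1 := by linarith
  set y := 1 / (2 * q) with hy
  set lam := genInv ψ y with hlam
  -- scaling lemma from convexity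
  have scale : ∀ a t : ℝ, 0 ≤ a → a ≤ 1 → 0 ≤ t → ψ (a * t) ≤ a * ψ t := by
    intro a t ha ha1 ht
    have h := hconv.2 (Set.mem_Ici.2 ht) (Set.mem_Ici.2 (le_refl (0:ℝ))) ha
      (by linarith : (0:ℝ) ≤ 1 - a) (by ring)
    simpa [h0, smul_eq_mul] using h
  have hlam_nonneg : 0 ≤ lam := Real.sInf_nonneg (fun z hz => hz.1)
  -- below lam, ψ < y (needs set nonempty only for membership direction)
  have hbelow : ∀ t : ℝ, 0 ≤ t → t < lam → ψ t < y := by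
    intro t ht htl
    by_contra hcon
    push_neg at hcon
    have : lam ≤ t := csInf_le ⟨0, fun z hz => hz.1⟩ ⟨ht, hcon⟩
    linarith
  -- lam > 0 when y > 0
  have hlam_pos : 0 < q → 0 < lam := by
    intro hq0'
    have hy0 : 0 < y := by
      rw [hy]; positivity
    have hne : {z : ℝ | 0 ≤ z ∧ y ≤ ψ z}.Nonempty := by
      obtain ⟨z, hz⟩ := ((htop.eventually_ge_atTop y).and (Filter.eventually_ge_atTop (0:ℝ))).exists
      exact ⟨z, hz.2, hz.1⟩
    have hψ1 : 0 ≤ ψ 1 := hnonneg 1 (by norm_num)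
    have hm : 0 < min 1 (y / (ψ 1 + 1)) := by
      apply lt_min one_pos
      positivity
    refine lt_of_lt_of_le hm (le_csInf hne ?_)
    rintro z ⟨hz0, hzy⟩
    rcases le_or_gt 1 z with h1 | h1
    · exact le_trans (min_le_left _ _) h1
    · have hscale : ψ z ≤ z * ψ 1 := by
        have := scale z 1 hz0 h1.le zero_le_one
        simpa using this
      have : y ≤ z * (ψ 1 + 1) := by nlinarith
      have : y / (ψ 1 + 1) ≤ z := by
        rw [div_le_iff₀ (by positivity)]; linarith
      exact le_trans (min_le_right _ _) this
  -- membership for each ε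
  have Smem : ∀ ε : ℝ, 0 < ε → (1/lam + ε) ∈
      {σ : ℝ | 0 < σ ∧ ∫ ω, ψ (|(fun ω => (if ω = x then 1 / (π {x}).toReal else 0) - 1) ω| / σ) ∂π ≤ 1} := by
    intro ε hε
    have hσ0 : 0 < 1/lam + ε := by positivity
    set σ := 1/lam + ε with hσ
    refine ⟨hσ0, ?_⟩
    set A := ψ (|1/p - 1| / σ) with hA
    set B := ψ (1/σ) with hB
    have hintegrand : (fun ω => ψ (|(fun ω => (if ω = x then 1 / (π {x}).toReal else 0) - 1) ω| / σ))
        = fun ω => Set.indicator {x} (fun _ => A - B) ω + B := by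
      funext ω
      by_cases h : ω = x
      · simp [h, hA, Set.indicator, ← hp]
      · simp [h, hB, Set.indicator]
    rw [hintegrand]
    have hint1 : Integrable (fun ω => Set.indicator {x} (fun _ => A - B) ω) π :=
      (integrable_const (A - B)).indicator (measurableSet_singleton x)
    rw [integral_add hint1 (integrable_const B), integral_indicator_const _ (measurableSet_singleton x),
      integral_const, probReal_univ]
    simp only [smul_eq_mul, measureReal_def, one_mul, ← hp]
    -- now goal : (A - B) * p + B ≤ 1
    have habs : |1/p - 1| = q / p := by
      rw [abs_of_nonneg (by rw [sub_nonneg]; exact one_le_one_div hp0 hp1)]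
      field_simp
      linarith
    have hApA : p * A ≤ q * B := by
      have h1 : |1/p - 1| / σ = (q/p) * (1/σ) := by rw [habs]; ring
      have h2 : A ≤ (q/p) * B := by
        rw [hA, h1, hB]
        exact scale (q/p) (1/σ) (by positivity) ((div_le_one hp0).2 hqp) (by positivity)
      calc p * A ≤ p * ((q/p) * B) := by
            apply mul_le_mul_of_nonneg_left h2 hp0.le
        _ = q * B := by field_simp
    have hbound : 2 * q * B ≤ 1 := by
      rcases eq_or_lt_of_le hq0 with hq' | hq'
      · simp [← hq']
      · have hlp := hlam_pos hq'
        have h1σ : 1/σ < lam := by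
          rw [hσ, div_lt_iff₀ (by positivity)]
          have : lam * (1/lam) = 1 := by field_simp
          nlinarith
        have hBy : B < y := hbelow (1/σ) (by positivity) h1σ
        have : B < 1 / (2*q) := by rwa [← hy]
        rw [lt_div_iff₀ (by positivity)] at this
        linarith
    have hB0 : 0 ≤ B := hnonneg _ (Set.mem_Ici.2 (by positivity))
    nlinarith
  have hle : ∀ ε : ℝ, 0 < ε → luxNorm ψ π (fun ω => (if ω = x then 1 / (π {x}).toReal else 0) - 1) ≤ 1/lam + ε := by
    intro ε hε
    exact csInf_le ⟨0, fun σ hσ => hσ.1.le⟩ (Smem ε hε)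
  have : luxNorm ψ π (fun ω => (if ω = x then 1 / (π {x}).toReal else 0) - 1) ≤ 1/lam :=
    le_of_forall_pos_le_add (fun ε hε => hle ε hε)
  simpa [hlam, hy, hq] using this
end
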